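/- Under the hypothesis that L_pc ∘ L_cc^j ∘ L_cp = 0 for all j < n, one has the identity Δ ∘ L^{n+1} ∘ Δ⊥ ∘ L ∘ Δ = L_pc ∘ L_cc^n ∘ L_cp (as the pp block, all other blocks vanishing). -/
import Mathlib


/-- if `L_pc L_cc^j L_cp = 0` for all `j < n`, then
`Δ L^{n+1} Δ⊥ L Δ = L_pc L_cc^n L_cp`. -/
theorem backwards_key_step (V : Type*) [AddCommGroup V] [Module ℂ V] [FiniteDimensional ℂ V]
    (L Δ : Module.End ℂ V) (hΔ : Δ * Δ = Δ) (n : ℕ)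
    (h : ∀ j < n, (Δ * L * (1 - Δ)) * ((1 - Δ) * L * (1 - Δ)) ^ j * ((1 - Δ) * L * Δ) = 0) :
    Δ * L ^ (n + 1) * (1 - Δ) * L * Δ =
      (Δ * L * (1 - Δ)) * ((1 - Δ) * L * (1 - Δ)) ^ n * ((1 - Δ) * L * Δ) := by
  have hf : (1 - Δ) * (1 - Δ) = 1 - Δ := by
    rw [sub_mul, one_mul, mul_sub, mul_one, hΔ]; abel
  have hQ' : ∀ x : Module.End ℂ V, (1 - Δ) * ((1 - Δ) * x) = (1 - Δ) * x := fun x => by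
    rw [← mul_assoc, hf]
  have key : ∀ k, k ≤ n →
      Δ * L ^ (k + 1) * (1 - Δ) * ((1 - Δ) * L * (1 - Δ)) ^ (n - k) * ((1 - Δ) * L * Δ) =
        (Δ * L * (1 - Δ)) * ((1 - Δ) * L * (1 - Δ)) ^ n * ((1 - Δ) * L * Δ) := by
    intro k
    induction k with
    | zero => intro _; simp
    | succ k ih =>
      intro hk
      have hlt : n - (k + 1) < n := by omega
      have hnk : n - k = (n - (k + 1)) + 1 := by omega
      have h0 := h (n - (k + 1)) hlt
      have ih' := ih (by omega)
      rw [hnk, pow_succ' ((1 - Δ) * L * (1 - Δ)) (n - (k + 1))] at ih'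
      rw [pow_succ]
      simp only [mul_assoc] at h0 ⊢
      simp only [mul_assoc, hQ'] at ih'
      rw [show ∀ X : Module.End ℂ V, Δ * (L ^ (k+1) * (L * X)) =
          Δ * (L ^ (k+1) * (Δ * (L * X))) + Δ * (L ^ (k+1) * ((1-Δ) * (L * X)))
          from fun X => by noncomm_ring]
      rw [h0, ih']
      simp
  have := key n le_rfl
  simp only [Nat.sub_self, pow_zero, mul_one] at this
  rw [← this]
  simp only [mul_assoc, hQ']
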